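/- For each α ∈ (0,1/2] and each ε ∈ (0, ε₀^α) where ε₀^α = (√α/(1-α))log(1/α), the equation ((1 - √(δ² - ε²))/(1 - δ))·e^{-δ + √(δ² - ε²)} = (1-α)/(e^{√α ε} - α e^{ε/√α}) has a unique solution δ ∈ (ε, min{1, ((1+α)/(2√α))ε}). -/

import Mathlib

open Real Set


lemma aux1 (x : ℝ) (hx : 0 < x) : Real.exp (-x) < 1 - x + x ^ 2 / 2 := by
  have mono : StrictMonoOn (fun y : ℝ => 1 - y + y ^ 2 / 2 - Real.exp (-y)) (Set.Ici 0) := by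
    apply strictMonoOn_of_deriv_pos (convex_Ici 0)
    · fun_prop
    · intro y hy
      rw [interior_Ici] at hy
      have hexp : HasDerivAt (fun y : ℝ => Real.exp (-y)) (-Real.exp (-y)) y := by
        refine ((Real.hasDerivAt_exp (-y)).comp y ((hasDerivAt_id y).neg)).congr_deriv ?_
        simp
      have hpoly : HasDerivAt (fun y : ℝ => 1 - y + y ^ 2 / 2) (-1 + y) y := by
        have h := ((hasDerivAt_id y).const_sub 1).add ((hasDerivAt_pow 2 y).div_const 2)
        refine h.congr_deriv ?_
        simp
      have hd := hpoly.sub hexp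
      rw [show deriv (fun y : ℝ => 1 - y + y ^ 2 / 2 - Real.exp (-y)) y = _ from hd.deriv]
      have h := Real.add_one_lt_exp (x := -y) (ne_of_lt (neg_lt_zero.mpr hy))
      linarith
  have h0 := mono Set.self_mem_Ici (Set.mem_Ici.mpr hx.le) hx
  norm_num at h0
  linarith

lemma aux2 (x : ℝ) (hx : 0 < x) : 1 + x + x ^ 2 / 2 < Real.exp x := by
  have mono : StrictMonoOn (fun y : ℝ => Real.exp y - (1 + y + y ^ 2 / 2)) (Set.Ici 0) := by
    apply strictMonoOn_of_deriv_pos (convex_Ici 0)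
    · fun_prop
    · intro y hy
      rw [interior_Ici] at hy
      have hpoly : HasDerivAt (fun y : ℝ => 1 + y + y ^ 2 / 2) (1 + y) y := by
        have h := ((hasDerivAt_id y).const_add 1).add ((hasDerivAt_pow 2 y).div_const 2)
        refine h.congr_deriv ?_
        simp
      have hd := (Real.hasDerivAt_exp y).sub hpoly
      rw [show deriv (fun y : ℝ => Real.exp y - (1 + y + y ^ 2 / 2)) y = _ from hd.deriv]
      have h := Real.add_one_lt_exp (x := y) (ne_of_gt hy)
      linarith
  have h0 := mono Set.self_mem_Ici (Set.mem_Ici.mpr hx.le) hx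
  norm_num at h0
  linarith

lemma aux3 (t : ℝ) (ht : 0 < t) : (1 - t) * Real.exp (2 * t) < 1 + t := by
  have mono : StrictMonoOn (fun y : ℝ => 1 + y - (1 - y) * Real.exp (2 * y)) (Set.Ici 0) := by
    apply strictMonoOn_of_deriv_pos (convex_Ici 0)
    · fun_prop
    · intro y hy
      rw [interior_Ici] at hy
      have hy' : 0 < y := hy
      have hexp : HasDerivAt (fun y : ℝ => Real.exp (2 * y)) (Real.exp (2 * y) * 2) y :=
        HasDerivAt.exp (by simpa using (hasDerivAt_id y).const_mul 2)
      have hmul : HasDerivAt (fun y : ℝ => (1 - y) * Real.exp (2 * y))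
          ((-1) * Real.exp (2 * y) + (1 - y) * (Real.exp (2 * y) * 2)) y := by
        have h := (((hasDerivAt_id y).const_sub 1).mul hexp)
        exact h
      have hd : HasDerivAt (fun y : ℝ => 1 + y - (1 - y) * Real.exp (2 * y))
          (1 - ((-1) * Real.exp (2 * y) + (1 - y) * (Real.exp (2 * y) * 2))) y := by
        have h := ((hasDerivAt_id y).const_add 1).sub hmul
        exact h
      rw [hd.deriv]
      have h := Real.add_one_lt_exp (x := -(2 * y)) (by intro h; linarith)
      have hepos := Real.exp_pos (2 * y)
      have hkey : (1 - 2 * y) * Real.exp (2 * y) < 1 := by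
        have h2 : (1 - 2 * y) < Real.exp (-(2 * y)) := by linarith
        calc (1 - 2 * y) * Real.exp (2 * y) < Real.exp (-(2 * y)) * Real.exp (2 * y) :=
              mul_lt_mul_of_pos_right h2 hepos
          _ = 1 := by rw [← Real.exp_add]; norm_num
      nlinarith
  have h0 := mono Set.self_mem_Ici (Set.mem_Ici.mpr ht.le) ht
  norm_num at h0
  linarith

lemma aux4 (x : ℝ) (h0 : 0 < x) (h1 : x < 1) : x * (-(2 * Real.log x)) ≤ 1 - x ^ 2 := by
  have anti : StrictAntiOn (fun y : ℝ => y⁻¹ - y + 2 * Real.log y) (Set.Ioc 0 1) := by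
    apply strictAntiOn_of_deriv_neg (convex_Ioc 0 1)
    · apply ContinuousOn.add
      · exact ContinuousOn.sub
          (continuousOn_inv₀.mono (fun y (hy : y ∈ Set.Ioc (0:ℝ) 1) => ne_of_gt hy.1))
          continuousOn_id
      · exact continuousOn_const.mul (Real.continuousOn_log.mono
          (fun y (hy : y ∈ Set.Ioc (0:ℝ) 1) => ne_of_gt hy.1))
    · intro y hy
      rw [interior_Ioc] at hy
      have hy0 : y ≠ 0 := ne_of_gt hy.1
      have hd : HasDerivAt (fun y : ℝ => y⁻¹ - y + 2 * Real.log y)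
          (-(y ^ 2)⁻¹ - 1 + 2 * y⁻¹) y := by
        have h := ((hasDerivAt_inv hy0).sub (hasDerivAt_id y)).add
          ((Real.hasDerivAt_log hy0).const_mul 2)
        exact h
      rw [hd.deriv]
      have hrw : -(y ^ 2)⁻¹ - 1 + 2 * y⁻¹ = -((1 - y) ^ 2) / y ^ 2 := by
        field_simp
        ring
      rw [hrw]
      apply div_neg_of_neg_of_pos
      · have : (0:ℝ) < (1 - y) ^ 2 := pow_pos (by linarith [hy.2]) 2
        linarith
      · positivity
  have h := anti ⟨h0, h1.le⟩ ⟨one_pos, le_refl 1⟩ h1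
  norm_num at h
  nlinarith [mul_pos h0 h, mul_inv_cancel₀ (ne_of_gt h0)]

noncomputable def gfun (ε δ : ℝ) : ℝ :=
  (1 - Real.sqrt (δ ^ 2 - ε ^ 2)) / (1 - δ) * Real.exp (-δ + Real.sqrt (δ ^ 2 - ε ^ 2))

lemma gfun_hasDeriv (ε δ : ℝ) (hε : 0 < ε) (h1 : ε < δ) (h2 : δ < 1) :
    ∃ d, HasDerivAt (gfun ε) d δ ∧ 0 < d := by
  set s := Real.sqrt (δ ^ 2 - ε ^ 2) with hs_def
  have hpos : 0 < δ ^ 2 - ε ^ 2 := by nlinarith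
  have hs0 : 0 < s := Real.sqrt_pos.mpr hpos
  have hs2 : s ^ 2 = δ ^ 2 - ε ^ 2 := Real.sq_sqrt hpos.le
  have hsδ : s < δ := by nlinarith
  have hδ1 : (0:ℝ) < 1 - δ := by linarith
  have hδ1' : (1:ℝ) - δ ≠ 0 := ne_of_gt hδ1
  have hinner : HasDerivAt (fun x : ℝ => x ^ 2 - ε ^ 2) (2 * δ) δ := by
    have := (hasDerivAt_pow 2 δ).sub_const (ε ^ 2)
    refine this.congr_deriv ?_
    simp
  have hsq : HasDerivAt (fun x : ℝ => Real.sqrt (x ^ 2 - ε ^ 2)) (δ / s) δ := by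
    have h := (Real.hasDerivAt_sqrt (ne_of_gt hpos)).comp δ hinner
    refine h.congr_deriv ?_
    rw [← hs_def]
    field_simp
  have hN : HasDerivAt (fun x : ℝ => 1 - Real.sqrt (x ^ 2 - ε ^ 2)) (-(δ / s)) δ := by
    have h := hsq.const_sub 1
    exact h
  have hD : HasDerivAt (fun x : ℝ => 1 - x) (-1 : ℝ) δ := by
    have h := (hasDerivAt_id δ).const_sub 1
    exact h
  have hQ := hN.div hD hδ1'
  have hEi : HasDerivAt (fun x : ℝ => -x + Real.sqrt (x ^ 2 - ε ^ 2)) (-1 + δ / s) δ := by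
    have h := ((hasDerivAt_id δ).neg).add hsq
    exact h
  have hE := hEi.exp
  have hg := hQ.mul hE
  refine ⟨_, hg, ?_⟩
  have hval : (-(δ / s) * (1 - δ) - (1 - s) * (-1)) / (1 - δ) ^ 2 *
        Real.exp (-δ + s) + (1 - s) / (1 - δ) * (Real.exp (-δ + s) * (-1 + δ / s)) =
      Real.exp (-δ + s) * (δ * (δ - s)) / (1 - δ) ^ 2 := by
    field_simp
    ring
  show 0 < (-(δ / s) * (1 - δ) - (1 - s) * (-1)) / (1 - δ) ^ 2 *
        Real.exp (-δ + s) + (1 - s) / (1 - δ) * (Real.exp (-δ + s) * (-1 + δ / s))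
  rw [hval]
  have h0δ : 0 < δ := lt_trans hε h1
  exact div_pos (mul_pos (Real.exp_pos _) (mul_pos h0δ (by linarith))) (by positivity)

lemma gfun_cont (ε : ℝ) : ContinuousOn (gfun ε) (Set.Iio 1) := by
  apply ContinuousOn.mul
  · apply ContinuousOn.div
    · exact (continuous_const.sub (Real.continuous_sqrt.comp
        ((continuous_pow 2).sub continuous_const))).continuousOn
    · exact (continuous_const.sub continuous_id).continuousOn
    · intro x hx
      have : x < 1 := hx
      intro h
      have : (1:ℝ) - x > 0 := by linarith
      linarith [h ▸ this]
  · exact (Real.continuous_exp.comp ((continuous_id.neg).add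
      (Real.continuous_sqrt.comp ((continuous_pow 2).sub continuous_const)))).continuousOn

lemma gfun_mono (ε : ℝ) (hε : 0 < ε) : StrictMonoOn (gfun ε) (Set.Ico ε 1) := by
  apply strictMonoOn_of_deriv_pos (convex_Ico ε 1)
  · exact (gfun_cont ε).mono (fun x hx => hx.2)
  · intro x hx
    rw [interior_Ico] at hx
    obtain ⟨d, hd, hdpos⟩ := gfun_hasDeriv ε x hε hx.1 hx.2
    rw [hd.deriv]
    exact hdpos

set_option maxHeartbeats 1000000 in
theorem stmt4 (α ε : ℝ) (hα : α ∈ Set.Ioc (0 : ℝ) (1 / 2)) (hε : 0 < ε)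
    (hε' : ε < Real.sqrt α / (1 - α) * Real.log (1 / α)) :
    ∃! δ : ℝ, δ ∈ Set.Ioo ε (min 1 ((1 + α) / (2 * Real.sqrt α) * ε)) ∧
      (1 - Real.sqrt (δ ^ 2 - ε ^ 2)) / (1 - δ) *
          Real.exp (-δ + Real.sqrt (δ ^ 2 - ε ^ 2)) =
        (1 - α) / (Real.exp (Real.sqrt α * ε) - α * Real.exp (ε / Real.sqrt α)) := by
  obtain ⟨hα0, hα2⟩ := hα
  have hα1 : α < 1 := by linarith
  set sa := Real.sqrt α with hsa_def
  have hsa0 : 0 < sa := Real.sqrt_pos.mpr hα0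
  have hsa2 : sa ^ 2 = α := Real.sq_sqrt hα0.le
  have hsa1 : sa < 1 := by nlinarith
  -- ε < 1
  have hε1 : ε < 1 := by
    have h4 := aux4 sa hsa0 hsa1
    have hlrw : Real.log (1 / α) = -(2 * Real.log sa) := by
      rw [one_div, Real.log_inv, ← hsa2, Real.log_pow]
      push_cast
      ring
    have hkey : sa * Real.log (1 / α) ≤ 1 - α := by
      rw [hlrw]
      nlinarith
    calc ε < sa / (1 - α) * Real.log (1 / α) := hε'
      _ ≤ 1 := by
          rw [div_mul_eq_mul_div, div_le_one (by linarith : (0:ℝ) < 1 - α)]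
          linarith
  have hεsa : ε * (1 - α) < sa * Real.log (1 / α) := by
    have h := hε'
    rw [div_mul_eq_mul_div, lt_div_iff₀ (by linarith : (0:ℝ) < 1 - α)] at h
    linarith
  set D := Real.exp (sa * ε) - α * Real.exp (ε / sa) with hD_def
  have hDpos : 0 < D := by
    have hlog_inv : Real.log (1 / α) = -Real.log α := by rw [one_div, Real.log_inv]
    have h2 : Real.log α + ε / sa < sa * ε := by
      rw [hlog_inv] at hεsa
      have hdiff : (ε / sa - sa * ε) * sa = ε * (1 - α) := by
        field_simp
        linear_combination (-1) * hsa2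
      nlinarith
    have h3 : α * Real.exp (ε / sa) < Real.exp (sa * ε) := by
      calc α * Real.exp (ε / sa) = Real.exp (Real.log α + ε / sa) := by
            rw [Real.exp_add, Real.exp_log hα0]
        _ < Real.exp (sa * ε) := Real.exp_lt_exp.mpr h2
    rw [hD_def]
    linarith
  set K := (1 - α) / D with hK_def
  have hKpos : 0 < K := div_pos (by linarith) hDpos
  -- value at ε
  have hgε : gfun ε ε = Real.exp (-ε) / (1 - ε) := by
    unfold gfun
    simp
    ring
  have hgεK : gfun ε ε < K := by
    rw [hgε, hK_def, div_lt_div_iff₀ (by linarith : (0:ℝ) < 1 - ε) hDpos]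
    -- exp(-ε) * D < (1-α) * (1-ε)
    set u := ε * (1 - sa) with hu_def
    set v := ε * (1 - sa) / sa with hv_def
    have hu : 0 < u := mul_pos hε (by linarith)
    have hv : 0 < v := div_pos hu hsa0
    have h1 := aux1 u hu
    have h2 := aux2 v hv
    have huv : sa * v = u := by
      rw [hv_def]
      field_simp
      exact hu_def.symm
    have hav : α * v = sa * u := by
      have : α * v = sa * (sa * v) := by rw [← hsa2]; ring
      rw [this, huv]
    have hav2 : α * v ^ 2 = u ^ 2 := by
      have : α * v ^ 2 = (sa * v) ^ 2 := by rw [← hsa2]; ring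
      rw [this, huv]
    have e1 : Real.exp (sa * ε) = Real.exp ε * Real.exp (-u) := by
      rw [← Real.exp_add]
      congr 1
      rw [hu_def]
      ring
    have e2 : Real.exp (ε / sa) = Real.exp ε * Real.exp v := by
      rw [← Real.exp_add]
      congr 1
      rw [hv_def]
      field_simp
      ring
    have hexpε : Real.exp (-ε) * Real.exp ε = 1 := by
      rw [← Real.exp_add]
      norm_num
    have hD' : Real.exp (-ε) * D = Real.exp (-u) - α * Real.exp v := by
      rw [hD_def, e1, e2]
      calc Real.exp (-ε) * (Real.exp ε * Real.exp (-u) - α * (Real.exp ε * Real.exp v))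
          = (Real.exp (-ε) * Real.exp ε) * Real.exp (-u)
            - α * ((Real.exp (-ε) * Real.exp ε) * Real.exp v) := by ring
        _ = Real.exp (-u) - α * Real.exp v := by rw [hexpε]; ring
    rw [hD']
    have hα2exp := mul_lt_mul_of_pos_left h2 hα0
    -- exp(-u) - α exp v < (1-u+u²/2) - α(1+v+v²/2) = (1-α)(1-ε)
    have hkey : 1 - u + u ^ 2 / 2 - α * (1 + v + v ^ 2 / 2) = (1 - α) * (1 - ε) := by
      linear_combination (-1) * hav + (-1/2) * hav2 + (-(1+sa)) * hu_def + ε * hsa2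
    linarith [h1, hα2exp, hkey]
  set c := (1 + α) / (2 * sa) with hc_def
  set m := min 1 (c * ε) with hm_def
  have hc1 : 1 < c := by
    rw [hc_def, lt_div_iff₀ (by positivity : (0:ℝ) < 2 * sa)]
    nlinarith [sq_nonneg (1 - sa)]
  have hεm : ε < m := lt_min hε1 (by nlinarith)
  have hm1 : m ≤ 1 := min_le_left _ _
  obtain ⟨δ₂, hδ₂ε, hδ₂1, hδ₂m, hδ₂K⟩ :
      ∃ δ₂, ε < δ₂ ∧ δ₂ < 1 ∧ δ₂ ≤ m ∧ K < gfun ε δ₂ := by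
    rcases lt_or_ge (c * ε) 1 with hcase | hcase
    · refine ⟨c * ε, by nlinarith, hcase, by rw [hm_def]; exact le_min hcase.le le_rfl, ?_⟩
      set t := ε * (1 - α) / (2 * sa) with ht_def
      have ht0 : 0 < t := div_pos (mul_pos hε (by linarith)) (by positivity)
      have hsqrt : Real.sqrt ((c * ε) ^ 2 - ε ^ 2) = t := by
        rw [show (c * ε) ^ 2 - ε ^ 2 = t ^ 2 from by
          rw [ht_def, hc_def]
          field_simp
          ring_nf
          linear_combination (-4) * hsa2]
        exact Real.sqrt_sq ht0.le
      have hexp_arg : -(c * ε) + t = -(sa * ε) := by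
        rw [ht_def, hc_def]
        field_simp
        linear_combination 2 * hsa2
      have hgc : gfun ε (c * ε) = (1 - t) / (1 - c * ε) * Real.exp (-(sa * ε)) := by
        unfold gfun
        rw [hsqrt, hexp_arg]
      rw [hgc, hK_def, div_mul_eq_mul_div,
        div_lt_div_iff₀ hDpos (by linarith : (0:ℝ) < 1 - c * ε)]
      have h2t : ε / sa - sa * ε = 2 * t := by
        rw [ht_def]
        field_simp
        linear_combination (-1) * hsa2
      have hexpD : Real.exp (-(sa * ε)) * D = 1 - α * Real.exp (2 * t) := by
        rw [hD_def, mul_sub, ← Real.exp_add, ← h2t]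
        rw [show -(sa * ε) + sa * ε = 0 from by ring, Real.exp_zero]
        rw [mul_comm (Real.exp (-(sa * ε))) (α * Real.exp (ε / sa)), mul_assoc,
          ← Real.exp_add]
        congr 2
      have h3 := aux3 t ht0
      have hid : (1 - α) * (1 - c * ε) = 1 - α - t - t * α := by
        rw [ht_def, hc_def]
        field_simp
        ring
      calc (1 - α) * (1 - c * ε) = 1 - α - t - t * α := hid
        _ < 1 - t - α * ((1 - t) * Real.exp (2 * t)) := by
            have := mul_lt_mul_of_pos_left h3 hα0
            linarith
        _ = (1 - t) * (1 - α * Real.exp (2 * t)) := by ring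
        _ = (1 - t) * (Real.exp (-(sa * ε)) * D) := by rw [hexpD]
        _ = (1 - t) * Real.exp (-(sa * ε)) * D := by ring
    · have hm : m = 1 := min_eq_left hcase
      set q := 1 - Real.sqrt (1 - ε ^ 2) with hq_def
      have hq0 : 0 < q := by
        have hnn : (0:ℝ) ≤ 1 - ε ^ 2 := by nlinarith
        have h : Real.sqrt (1 - ε ^ 2) < 1 := by
          nlinarith [Real.sq_sqrt hnn, Real.sqrt_nonneg (1 - ε ^ 2)]
        rw [hq_def]
        linarith
      have hM0 : (0:ℝ) < max K 1 := lt_of_lt_of_le one_pos (le_max_right K 1)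
      set r := q * Real.exp (-1) / (2 * max K 1) with hr_def
      have hr0 : 0 < r := div_pos (mul_pos hq0 (Real.exp_pos _)) (by positivity)
      set δ₂ := max ((1 + ε) / 2) (1 - r) with hδ₂_def
      have hδ₂ε : ε < δ₂ := lt_of_lt_of_le (by linarith) (le_max_left _ _)
      have hδ₂1 : δ₂ < 1 := max_lt (by linarith) (by linarith)
      refine ⟨δ₂, hδ₂ε, hδ₂1, by rw [hm]; exact hδ₂1.le, ?_⟩
      have hδ₂sq : δ₂ ^ 2 - ε ^ 2 ≤ 1 - ε ^ 2 := by nlinarith [hδ₂1, lt_trans hε hδ₂ε]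
      have hs_le : Real.sqrt (δ₂ ^ 2 - ε ^ 2) ≤ Real.sqrt (1 - ε ^ 2) :=
        Real.sqrt_le_sqrt hδ₂sq
      have hs_nonneg : 0 ≤ Real.sqrt (δ₂ ^ 2 - ε ^ 2) := Real.sqrt_nonneg _
      have h1q : q ≤ 1 - Real.sqrt (δ₂ ^ 2 - ε ^ 2) := by rw [hq_def]; linarith
      have hexp_ge : Real.exp (-1) ≤ Real.exp (-δ₂ + Real.sqrt (δ₂ ^ 2 - ε ^ 2)) :=
        Real.exp_le_exp.mpr (by linarith)
      have h1δ : 0 < 1 - δ₂ := by linarith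
      have h1 : 1 - δ₂ ≤ r := by
        have := le_max_right ((1 + ε) / 2) (1 - r)
        linarith
      have h2 : q * Real.exp (-1) / r = 2 * max K 1 := by
        rw [hr_def]
        field_simp
      have h3 : q * Real.exp (-1) / r ≤ q * Real.exp (-1) / (1 - δ₂) := by
        apply div_le_div_of_nonneg_left (by positivity) h1δ h1
      have h4 : q * Real.exp (-1) / (1 - δ₂) ≤ gfun ε δ₂ := by
        unfold gfun
        rw [div_mul_eq_mul_div]
        apply (div_le_div_iff_of_pos_right h1δ).mpr
        exact mul_le_mul h1q hexp_ge (Real.exp_pos _).le (by linarith)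
      have hKlt : K < 2 * max K 1 := by
        have := le_max_left K 1
        have := le_max_right K 1
        linarith
      linarith [hKlt, h2.ge, h3, h4]
  -- IVT
  have hcont : ContinuousOn (gfun ε) (Set.Icc ε δ₂) :=
    (gfun_cont ε).mono (fun x hx => lt_of_le_of_lt hx.2 hδ₂1)
  have hIVT := intermediate_value_Ico hδ₂ε.le hcont
  have hKmem : K ∈ Set.Ico (gfun ε ε) (gfun ε δ₂) := ⟨hgεK.le, hδ₂K⟩
  obtain ⟨δ, hδmem, hδeq⟩ := hIVT hKmem
  have hδε : ε < δ := by
    rcases lt_or_eq_of_le hδmem.1 with h | h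
    · exact h
    · exfalso
      rw [← h] at hδeq
      exact absurd hδeq (ne_of_lt hgεK)
  have hδm : δ < m := lt_of_lt_of_le hδmem.2 hδ₂m
  refine ⟨δ, ⟨⟨hδε, hδm⟩, hδeq⟩, ?_⟩
  rintro y ⟨⟨hy1, hy2⟩, hyeq⟩
  have hmono := gfun_mono ε hε
  apply hmono.injOn ⟨hy1.le, lt_of_lt_of_le hy2 hm1⟩ ⟨hδε.le, lt_of_lt_of_le hδm hm1⟩
  show gfun ε y = gfun ε δ
  exact hyeq.trans hδeq.symm
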